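/- In every line representation (α, β) of the Pappus gadget, the three anchor points α(p7), α(p8), α(p9) are collinear. -/

import Mathlib

set_option maxRecDepth 8000

abbrev Pt : Type := ℝ × ℝ

def IsLine (L : Set Pt) : Prop :=
  ∃ a b : Pt, a ≠ b ∧ L = (affineSpan ℝ {a, b} : Set Pt)

def IsSegment (S : Set Pt) : Prop :=
  ∃ a b : Pt, a ≠ b ∧ S = segment ℝ a b

structure PHypergraph (ι : Type) where
  V : Finset ι
  E : Finset (Finset ι)
  edge_nonempty : ∀ e ∈ E, e.Nonempty
  edge_subset : ∀ e ∈ E, e ⊆ V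

structure LineRep {ι : Type} (H : PHypergraph ι) where
  α : ι → Pt
  β : Finset ι → Set Pt
  α_inj : Set.InjOn α ↑H.V
  β_inj : Set.InjOn β ↑H.E
  β_isLine : ∀ e ∈ H.E, IsLine (β e)
  incidence : ∀ v ∈ H.V, ∀ e ∈ H.E, (v ∈ e ↔ α v ∈ β e)

structure SegmentRep {ι : Type} (H : PHypergraph ι) where
  α : ι → Pt
  β : Finset ι → Set Pt
  α_inj : Set.InjOn α ↑H.V
  β_inj : Set.InjOn β ↑H.E
  β_isSegment : ∀ e ∈ H.E, IsSegment (β e)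
  incidence : ∀ v ∈ H.V, ∀ e ∈ H.E, (v ∈ e ↔ α v ∈ β e)

def SegmentRep.Strict {ι : Type} {H : PHypergraph ι} (R : SegmentRep H) : Prop :=
  ∀ e ∈ H.E, ∀ e' ∈ H.E, e ≠ e' → (R.β e ∩ R.β e').Subsingleton

def LineRep.CrossingFree {ι : Type} {H : PHypergraph ι} (R : LineRep H) : Prop :=
  ∀ e ∈ H.E, ∀ e' ∈ H.E, ((R.β e ∩ R.β e').Nonempty ↔ ∃ v, v ∈ e ∧ v ∈ e')

def SegmentRep.CrossingFree {ι : Type} {H : PHypergraph ι} (R : SegmentRep H) : Prop :=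
  ∀ e ∈ H.E, ∀ e' ∈ H.E, ((R.β e ∩ R.β e').Nonempty ↔ ∃ v, v ∈ e ∧ v ∈ e')

def pappusE : Finset (Finset (Fin 9)) :=
  {({0, 1, 2} : Finset (Fin 9)), {3, 4, 5}, {0, 3, 7}, {0, 4, 8},
    {1, 3, 6}, {1, 5, 8}, {2, 4, 6}, {2, 5, 7}}

/-- The Pappus gadget: vertex `i : Fin 9` stands for `p(i+1)`;
the anchors `p7, p8, p9` are the vertices `6, 7, 8`. -/
def pappus : PHypergraph (Fin 9) where
  V := Finset.univ
  E := pappusE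
  edge_nonempty := by decide
  edge_subset := by decide

noncomputable def det3 (p q r : Pt) : ℝ :=
  (q.1 - p.1) * (r.2 - p.2) - (q.2 - p.2) * (r.1 - p.1)

lemma ne_coord {p q : Pt} (h : p ≠ q) : p.1 ≠ q.1 ∨ p.2 ≠ q.2 := by
  by_contra h'
  push_neg at h'
  exact h (Prod.ext h'.1 h'.2)

lemma exists_param {p q r : Pt} (hpq : p ≠ q) (h : det3 p q r = 0) :
    ∃ u : ℝ, r.1 = p.1 + u * (q.1 - p.1) ∧ r.2 = p.2 + u * (q.2 - p.2) := by
  unfold det3 at h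
  rcases ne_coord hpq with h1 | h2
  · have hne : q.1 - p.1 ≠ 0 := sub_ne_zero.2 (Ne.symm h1)
    refine ⟨(r.1 - p.1) / (q.1 - p.1), ?_, ?_⟩
    · field_simp
      ring
    · field_simp
      linear_combination h
  · have hne : q.2 - p.2 ≠ 0 := sub_ne_zero.2 (Ne.symm h2)
    refine ⟨(r.2 - p.2) / (q.2 - p.2), ?_, ?_⟩
    · field_simp
      linear_combination -h
    · field_simp
      ring

lemma mem_span_iff_det {p q : Pt} (hpq : p ≠ q) (x : Pt) :
    x ∈ (affineSpan ℝ {p, q} : Set Pt) ↔ det3 p q x = 0 := by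
  constructor
  · intro hx
    have hx' : (x - p) +ᵥ p ∈ line[ℝ, p, q] := by
      simpa using hx
    obtain ⟨r, hr⟩ := vadd_left_mem_affineSpan_pair.1 hx'
    have h1 : r * (q.1 - p.1) = x.1 - p.1 := congrArg Prod.fst hr
    have h2 : r * (q.2 - p.2) = x.2 - p.2 := congrArg Prod.snd hr
    unfold det3
    linear_combination (q.2 - p.2) * h1 - (q.1 - p.1) * h2
  · intro h
    obtain ⟨u, hu1, hu2⟩ := exists_param hpq h
    have hm := smul_vsub_vadd_mem_affineSpan_pair (k := ℝ) u p q
    have hx : u • (q -ᵥ p) +ᵥ p = x := by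
      apply Prod.ext
      · show u * (q.1 - p.1) + p.1 = x.1
        rw [hu1]; ring
      · show u * (q.2 - p.2) + p.2 = x.2
        rw [hu2]; ring
    rw [hx] at hm
    exact hm

lemma line_mem_iff {L : Set Pt} (hL : IsLine L) {p q : Pt} (hp : p ∈ L) (hq : q ∈ L)
    (hpq : p ≠ q) (x : Pt) : x ∈ L ↔ det3 p q x = 0 := by
  obtain ⟨a, b, hab, rfl⟩ := hL
  rw [mem_span_iff_det hab] at hp hq ⊢
  obtain ⟨tp, hp1, hp2⟩ := exists_param hab hp
  obtain ⟨tq, hq1, hq2⟩ := exists_param hab hq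
  constructor
  · intro hx
    obtain ⟨tx, hx1, hx2⟩ := exists_param hab hx
    unfold det3
    rw [hx1, hx2, hp1, hp2, hq1, hq2]
    ring
  · intro hx
    obtain ⟨u, hx1, hx2⟩ := exists_param hpq hx
    unfold det3
    rw [hx1, hx2, hp1, hp2, hq1, hq2]
    ring

lemma collinear_of_det3 {p q r : Pt} (h : det3 p q r = 0) :
    Collinear ℝ ({p, q, r} : Set Pt) := by
  by_cases hpq : p = q
  · subst hpq
    have : ({p, p, r} : Set Pt) = {p, r} := by simp
    rw [this]
    exact collinear_pair ℝ p r
  · obtain ⟨u, hu1, hu2⟩ := exists_param hpq h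
    rw [collinear_iff_exists_forall_eq_smul_vadd]
    refine ⟨p, q - p, ?_⟩
    intro x hx
    rcases hx with rfl | rfl | rfl
    · exact ⟨0, by simp⟩
    · exact ⟨1, by simp⟩
    · refine ⟨u, ?_⟩
      apply Prod.ext
      · simpa using hu1.trans (by ring)
      · simpa using hu2.trans (by ring)

lemma parallel_collapse {p q r s x : Pt} (h1 : det3 p q x = 0) (h2 : det3 r s x = 0)
    (hD : (q.1 - p.1) * (s.2 - r.2) - (q.2 - p.2) * (s.1 - r.1) = 0) (hrs : r ≠ s) :
    det3 p q r = 0 := by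
  unfold det3 at h1 h2 ⊢
  have key : (q.1 - p.1) * (x.2 - r.2) - (q.2 - p.2) * (x.1 - r.1) = 0 := by
    rcases ne_coord hrs with hc | hc
    · have hne : s.1 - r.1 ≠ 0 := sub_ne_zero.2 (Ne.symm hc)
      have : (s.1 - r.1) * ((q.1 - p.1) * (x.2 - r.2) - (q.2 - p.2) * (x.1 - r.1)) = 0 := by
        linear_combination (x.1 - r.1) * hD + (q.1 - p.1) * h2
      exact (mul_eq_zero.1 this).resolve_left hne
    · have hne : s.2 - r.2 ≠ 0 := sub_ne_zero.2 (Ne.symm hc)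
      have : (s.2 - r.2) * ((q.1 - p.1) * (x.2 - r.2) - (q.2 - p.2) * (x.1 - r.1)) = 0 := by
        linear_combination (x.2 - r.2) * hD + (q.2 - p.2) * h2
      exact (mul_eq_zero.1 this).resolve_left hne
  linear_combination h1 - key

set_option maxHeartbeats 1000000 in
lemma pappus_core (d t a4 b4 s a6 b6 a7 b7 a8 b8 : ℝ)
    (h037 : ((-1) * d * a7) = 0)
    (h048 : ((-1) * b4 * a8 + (1) * a4 * b8) = 0)
    (h136 : ((-1) * d * b6 + (-1) * d * a6 + (1) * d^2) = 0)
    (h158 : ((-1) * b4 * s * a8 + (1) * a4 * s * b8 + (-1) * d * b8 + (-1) * d * a8 + (1) * d * s * a8 + (1) * d * b4 * s + (1) * d^2 + (-1) * d^2 * s) = 0)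
    (h246 : ((-1) * b4 * a6 + (1) * a4 * b6 + (-1) * d * t * b6 + (1) * d * t * b4) = 0)
    (h257 : ((-1) * b4 * s * a7 + (1) * a4 * s * b7 + (-1) * d * a7 + (1) * d * s * a7 + (-1) * d * t * b7 + (1) * d * t * b4 * s + (1) * d^2 * t + (-1) * d^2 * t * s) = 0)
    (hD6 : ((-1) * d * b4 + (-1) * d * a4 + (1) * d^2 * t) ≠ 0)
    (hD7 : ((-1) * d * a4 * s + (1) * d^2 * t) ≠ 0)
    (hD8 : ((1) * d * b4 + (1) * d * a4 + (-1) * d * a4 * s) ≠ 0) :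
    ((-1) * b7 * a8 + (1) * a7 * b8 + (1) * b6 * a8 + (-1) * b6 * a7 + (-1) * a6 * b8 + (1) * a6 * b7) = 0 := by
  have key : ((-1) * b7 * a8 + (1) * a7 * b8 + (1) * b6 * a8 + (-1) * b6 * a7 + (-1) * a6 * b8 + (1) * a6 * b7) * (((-1) * d * b4 + (-1) * d * a4 + (1) * d^2 * t) * (((-1) * d * a4 * s + (1) * d^2 * t) * ((1) * d * b4 + (1) * d * a4 + (-1) * d * a4 * s))) = 0 := by
    linear_combination ((-1) * d^2 * a4 * b4^2 * s * b8 + (1) * d^2 * a4 * b4^2 * s * b6 + (1) * d^2 * a4 * b4^3 * s^2 + (-2) * d^2 * a4^2 * b4 * s * b8 + (2) * d^2 * a4^2 * b4 * s * b6 + (1) * d^2 * a4^2 * b4 * s^2 * b8 + (-1) * d^2 * a4^2 * b4 * s^2 * b6 + (1) * d^2 * a4^2 * b4^2 * s^2 + (-1) * d^2 * a4^3 * s * b8 + (1) * d^2 * a4^3 * s * b6 + (1) * d^2 * a4^3 * s^2 * b8 + (-1) * d^2 * a4^3 * s^2 * b6 + (1) * d^3 * a4 * b4^2 * s + (-2)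 * d^3 * a4 * b4^2 * s^2 + (1) * d^3 * a4^2 * b4 * s + (-1) * d^3 * a4^2 * b4 * s^2 + (1) * d^3 * t * b4^2 * b8 + (-1) * d^3 * t * b4^2 * b6 + (-1) * d^3 * t * b4^3 * s + (2) * d^3 * t * a4 * b4 * b8 + (-2) * d^3 * t * a4 * b4 * b6 + (-1) * d^3 * t * a4 * b4^2 * s + (1) * d^3 * t * a4^2 * b8 + (-1) * d^3 * t * a4^2 * b6 + (-1) * d^3 * t * a4^2 * s^2 * b8 + (1) * d^3 * t * a4^2 * s^2 * b6 + (-1) * d^4 * a4 * b4 * s + (1) * d^4 * a4 * b4 * s^2 + (-1) * d^4 * t * b4^2 + (2) * d^4 * t * b4^2 * s + (-1) * d^4 * t * a4 * b4 + (1) * d^4 * t * a4 * b4 * s + (-1) * d^4 * t^2 * b4 * b8 + (1) * d^4 * t^2 * b4 * b6 + (-1) * d^4 * t^2 * a4 * b8 + (1) * d^4 * t^2 * a4 * b6 + (1) * d^4 * t^2 * a4 * s * b8 + (-1) * d^4 * t^2 * a4 * s * b6 + (1) * d^5 * t * b4 + (-1) * d^5 * t * b4 * s) * h037 + ((-1)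 * d^2 * a4^2 * b4 * s^2 * b7 + (1) * d^2 * a4^2 * b4 * s^2 * b6 + (-1) * d^2 * a4^3 * s^2 * b7 + (1) * d^2 * a4^3 * s^2 * b6 + (1) * d^3 * a4 * b4 * s * b7 + (-1) * d^3 * a4 * b4 * s * b6 + (1) * d^3 * a4^2 * s * b7 + (-1) * d^3 * a4^2 * s * b6 + (-1) * d^3 * a4^2 * b4 * s^2 + (1) * d^3 * t * a4 * b4 * s * b7 + (-1) * d^3 * t * a4 * b4 * s * b6 + (-1) * d^3 * t * a4 * b4^2 * s^2 + (1) * d^3 * t * a4^2 * s * b7 + (-1) * d^3 * t * a4^2 * s * b6 + (1) * d^3 * t * a4^2 * s^2 * b7 + (-1) * d^3 * t * a4^2 * s^2 * b6 + (-1) * d^4 * a4^2 * s + (1) * d^4 * a4^2 * s^2 + (-1) * d^4 * t * b4 * b7 + (1) * d^4 * t * b4 * b6 + (-1) * d^4 * t * a4 * b7 + (1) * d^4 * t * a4 * b6 + (-1) * d^4 * t * a4 * s * b7 + (1) * d^4 * t * a4 * s * b6 + (2) * d^4 * t * a4 * b4 * s^2 + (1) * d^4 * t^2 * b4^2 * s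 + (-1) * d^4 * t^2 * a4 * s * b7 + (1) * d^4 * t^2 * a4 * s * b6 + (1) * d^5 * t * a4 + (-1) * d^5 * t * a4 * s^2 + (1) * d^5 * t^2 * b7 + (-1) * d^5 * t^2 * b6 + (1) * d^5 * t^2 * b4 + (-2) * d^5 * t^2 * b4 * s + (-1) * d^6 * t^2 + (1) * d^6 * t^2 * s) * h048 + ((1) * d^2 * a4^2 * b4 * s * b8 + (-1) * d^2 * a4^2 * b4 * s * b7 + (-1) * d^2 * a4^2 * b4^2 * s^2 + (1) * d^2 * a4^3 * s * b8 + (-1) * d^2 * a4^3 * s * b7 + (-1) * d^2 * a4^3 * s^2 * b8 + (1) * d^2 * a4^3 * s^2 * b7 + (-1) * d^3 * a4^2 * b4 * s + (1) * d^3 * a4^2 * b4 * s^2 + (-1) * d^3 * t * a4 * b4 * b8 + (1) * d^3 * t * a4 * b4 * b7 + (-1) * d^3 * t * a4 * b4 * s * b8 + (1) * d^3 * t * a4 * b4 * s * b7 + (1) * d^3 * t * a4 * b4^2 * s + (-1) * d^3 * t * a4^2 * b8 + (1) * d^3 * t * a4^2 * b7 + (1) * d^3 * t * a4^2 * s^2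 * b8 + (-1) * d^3 * t * a4^2 * s^2 * b7 + (1) * d^4 * t * a4 * b4 + (-1) * d^4 * t * a4 * b4 * s + (1) * d^4 * t^2 * b4 * b8 + (-1) * d^4 * t^2 * b4 * b7 + (1) * d^4 * t^2 * a4 * b8 + (-1) * d^4 * t^2 * a4 * b7 + (-1) * d^4 * t^2 * a4 * s * b8 + (1) * d^4 * t^2 * a4 * s * b7) * h136 + ((1) * d^2 * a4^2 * b4 * s * b7 + (-1) * d^2 * a4^2 * b4 * s * b6 + (1) * d^2 * a4^3 * s * b7 + (-1) * d^2 * a4^3 * s * b6 + (1) * d^3 * a4^2 * b4 * s + (-1) * d^3 * t * a4 * b4 * b7 + (1) * d^3 * t * a4 * b4 * b6 + (1) * d^3 * t * a4 * b4^2 * s + (-1) * d^3 * t * a4^2 * b7 + (1) * d^3 * t * a4^2 * b6 + (-1) * d^3 * t * a4^2 * s * b7 + (1) * d^3 * t * a4^2 * s * b6 + (-1) * d^4 * t * a4 * b4 + (-1) * d^4 * t * a4 * b4 * s + (-1) * d^4 * t^2 * b4^2 + (1) * d^4 * t^2 * a4 * b7 + (-1) * d^4 * t^2 * a4 * b6 +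 (1) * d^5 * t^2 * b4) * h158 + ((1) * d^3 * a4 * b4 * s * b8 + (-1) * d^3 * a4 * b4 * s * b7 + (1) * d^3 * a4^2 * s * b8 + (-1) * d^3 * a4^2 * s * b7 + (-1) * d^3 * a4^2 * s^2 * b8 + (1) * d^3 * a4^2 * s^2 * b7 + (1) * d^3 * a4^2 * b4 * s^2 + (1) * d^4 * a4^2 * s + (-1) * d^4 * a4^2 * s^2 + (-1) * d^4 * t * b4 * b8 + (1) * d^4 * t * b4 * b7 + (-1) * d^4 * t * a4 * b8 + (1) * d^4 * t * a4 * b7 + (1) * d^4 * t * a4 * s * b8 + (-1) * d^4 * t * a4 * s * b7 + (-1) * d^4 * t * a4 * b4 * s + (-1) * d^5 * t * a4 + (1) * d^5 * t * a4 * s) * h246 + ((-1) * d^3 * a4 * b4^2 * s + (-1) * d^3 * a4^2 * b4 * s + (1) * d^4 * a4 * b4 * s + (1) * d^4 * t * b4^2 + (1) * d^4 * t * a4 * b4 + (-1) * d^5 * t * b4) * h257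
  rcases mul_eq_zero.1 key with h | h
  · exact h
  · exact absurd h (mul_ne_zero hD6 (mul_ne_zero hD7 hD8))

theorem stmt1 (R : LineRep pappus) :
    Collinear ℝ {R.α 6, R.α 7, R.α 8} := by
  have hinc : ∀ (v : Fin 9) (e : Finset (Fin 9)), e ∈ pappus.E → (v ∈ e ↔ R.α v ∈ R.β e) :=
    fun v e he => R.incidence v (Finset.mem_univ v) e he
  have hdist : ∀ i j : Fin 9, i ≠ j → R.α i ≠ R.α j := by
    intro i j hij hEq
    exact hij (R.α_inj (by simp [pappus]) (by simp [pappus]) hEq)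
  have heA : ({0, 1, 2} : Finset (Fin 9)) ∈ pappus.E := by decide
  have hmA := line_mem_iff (R.β_isLine _ heA) ((hinc 0 _ heA).1 (by decide)) ((hinc 1 _ heA).1 (by decide)) (hdist 0 1 (by decide))
  have kA : det3 (R.α 0) (R.α 1) (R.α 2) = 0 := (hmA _).1 ((hinc 2 _ heA).1 (by decide))
  have heB : ({3, 4, 5} : Finset (Fin 9)) ∈ pappus.E := by decide
  have hmB := line_mem_iff (R.β_isLine _ heB) ((hinc 3 _ heB).1 (by decide)) ((hinc 4 _ heB).1 (by decide)) (hdist 3 4 (by decide))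
  have kB : det3 (R.α 3) (R.α 4) (R.α 5) = 0 := (hmB _).1 ((hinc 5 _ heB).1 (by decide))
  have heC : ({0, 3, 7} : Finset (Fin 9)) ∈ pappus.E := by decide
  have hmC := line_mem_iff (R.β_isLine _ heC) ((hinc 0 _ heC).1 (by decide)) ((hinc 3 _ heC).1 (by decide)) (hdist 0 3 (by decide))
  have kC : det3 (R.α 0) (R.α 3) (R.α 7) = 0 := (hmC _).1 ((hinc 7 _ heC).1 (by decide))
  have heD : ({0, 4, 8} : Finset (Fin 9)) ∈ pappus.E := by decide
  have hmD := line_mem_iff (R.β_isLine _ heD) ((hinc 0 _ heD).1 (by decide)) ((hinc 4 _ heD).1 (by decide)) (hdist 0 4 (by decide))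
  have kD : det3 (R.α 0) (R.α 4) (R.α 8) = 0 := (hmD _).1 ((hinc 8 _ heD).1 (by decide))
  have heE : ({1, 3, 6} : Finset (Fin 9)) ∈ pappus.E := by decide
  have hmE := line_mem_iff (R.β_isLine _ heE) ((hinc 1 _ heE).1 (by decide)) ((hinc 3 _ heE).1 (by decide)) (hdist 1 3 (by decide))
  have kE : det3 (R.α 1) (R.α 3) (R.α 6) = 0 := (hmE _).1 ((hinc 6 _ heE).1 (by decide))
  have heF : ({1, 5, 8} : Finset (Fin 9)) ∈ pappus.E := by decide
  have hmF := line_mem_iff (R.β_isLine _ heF) ((hinc 1 _ heF).1 (by decide)) ((hinc 5 _ heF).1 (by decide)) (hdist 1 5 (by decide))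
  have kF : det3 (R.α 1) (R.α 5) (R.α 8) = 0 := (hmF _).1 ((hinc 8 _ heF).1 (by decide))
  have heG : ({2, 4, 6} : Finset (Fin 9)) ∈ pappus.E := by decide
  have hmG := line_mem_iff (R.β_isLine _ heG) ((hinc 2 _ heG).1 (by decide)) ((hinc 4 _ heG).1 (by decide)) (hdist 2 4 (by decide))
  have kG : det3 (R.α 2) (R.α 4) (R.α 6) = 0 := (hmG _).1 ((hinc 6 _ heG).1 (by decide))
  have heH : ({2, 5, 7} : Finset (Fin 9)) ∈ pappus.E := by decide
  have hmH := line_mem_iff (R.β_isLine _ heH) ((hinc 2 _ heH).1 (by decide)) ((hinc 5 _ heH).1 (by decide)) (hdist 2 5 (by decide))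
  have kH : det3 (R.α 2) (R.α 5) (R.α 7) = 0 := (hmH _).1 ((hinc 7 _ heH).1 (by decide))
  have n013 : det3 (R.α 0) (R.α 1) (R.α 3) ≠ 0 :=
    fun h => absurd ((hinc 3 _ heA).2 ((hmA _).2 h)) (by decide)
  have n032 : det3 (R.α 0) (R.α 3) (R.α 2) ≠ 0 :=
    fun h => absurd ((hinc 2 _ heC).2 ((hmC _).2 h)) (by decide)
  have n041 : det3 (R.α 0) (R.α 4) (R.α 1) ≠ 0 :=
    fun h => absurd ((hinc 1 _ heD).2 ((hmD _).2 h)) (by decide)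
  have n132 : det3 (R.α 1) (R.α 3) (R.α 2) ≠ 0 :=
    fun h => absurd ((hinc 2 _ heE).2 ((hmE _).2 h)) (by decide)
  obtain ⟨t, ht1, ht2⟩ := exists_param (hdist 0 1 (by decide)) kA
  obtain ⟨s, hs1, hs2⟩ := exists_param (hdist 3 4 (by decide)) kB
  have nKD6 : ((R.α 3).1 - (R.α 1).1) * ((R.α 4).2 - (R.α 2).2) - ((R.α 3).2 - (R.α 1).2) * ((R.α 4).1 - (R.α 2).1) ≠ 0 :=
    fun h => n132 (parallel_collapse kE kG h (hdist 2 4 (by decide)))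
  have nKD7 : ((R.α 3).1 - (R.α 0).1) * ((R.α 5).2 - (R.α 2).2) - ((R.α 3).2 - (R.α 0).2) * ((R.α 5).1 - (R.α 2).1) ≠ 0 :=
    fun h => n032 (parallel_collapse kC kH h (hdist 2 5 (by decide)))
  have nKD8 : ((R.α 4).1 - (R.α 0).1) * ((R.α 5).2 - (R.α 1).2) - ((R.α 4).2 - (R.α 0).2) * ((R.α 5).1 - (R.α 1).1) ≠ 0 :=
    fun h => n041 (parallel_collapse kD kF h (hdist 1 5 (by decide)))
  simp only [det3] at kC kD kE kF kG kH n013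
  have H037 : ((-1) * (((R.α 1).1 - (R.α 0).1) * ((R.α 3).2 - (R.α 0).2) - ((R.α 1).2 - (R.α 0).2) * ((R.α 3).1 - (R.α 0).1)) * (((R.α 7).1 - (R.α 0).1) * ((R.α 3).2 - (R.α 0).2) - ((R.α 7).2 - (R.α 0).2) * ((R.α 3).1 - (R.α 0).1))) = 0 := by
    linear_combination (((R.α 1).1 - (R.α 0).1) * ((R.α 3).2 - (R.α 0).2) - ((R.α 1).2 - (R.α 0).2) * ((R.α 3).1 - (R.α 0).1)) * kC
  have H048 : ((-1) * (((R.α 1).1 - (R.α 0).1) * ((R.α 4).2 - (R.α 0).2) - ((R.α 1).2 - (R.α 0).2) * ((R.α 4).1 - (R.α 0).1)) * (((R.α 8).1 - (R.α 0).1) * ((R.α 3).2 - (R.α 0).2) - ((R.α 8).2 - (R.α 0).2) * ((R.α 3).1 - (R.α 0).1)) + (1) * (((R.α 4).1 - (R.α 0).1) * ((R.α 3).2 - (R.α 0).2) - ((R.α 4).2 - (R.α 0).2) * ((R.α 3).1 - (R.α 0).1)) * (((R.α 1).1 - (R.α 0).1) * ((R.α 8).2 - (R.α 0).2) - ((R.α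 1).2 - (R.α 0).2) * ((R.α 8).1 - (R.α 0).1))) = 0 := by
    linear_combination (((R.α 1).1 - (R.α 0).1) * ((R.α 3).2 - (R.α 0).2) - ((R.α 1).2 - (R.α 0).2) * ((R.α 3).1 - (R.α 0).1)) * kD
  have H136 : ((-1) * (((R.α 1).1 - (R.α 0).1) * ((R.α 3).2 - (R.α 0).2) - ((R.α 1).2 - (R.α 0).2) * ((R.α 3).1 - (R.α 0).1)) * (((R.α 1).1 - (R.α 0).1) * ((R.α 6).2 - (R.α 0).2) - ((R.α 1).2 - (R.α 0).2) * ((R.α 6).1 - (R.α 0).1)) + (-1) * (((R.α 1).1 - (R.α 0).1) * ((R.α 3).2 - (R.α 0).2) - ((R.α 1).2 - (R.α 0).2) * ((R.α 3).1 - (R.α 0).1)) * (((R.α 6).1 - (R.α 0).1) * ((R.α 3).2 - (R.α 0).2) - ((R.α 6).2 - (R.α 0).2) * ((R.α 3).1 - (R.α 0).1)) + (1) * (((R.α 1).1 - (R.α 0).1) * ((R.α 3).2 - (R.α 0).2) - ((R.α 1).2 - (R.α 0).2) * ((R.α 3).1 - (R.α 0).1))^2) = 0 := by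
    linear_combination (((R.α 1).1 - (R.α 0).1) * ((R.α 3).2 - (R.α 0).2) - ((R.α 1).2 - (R.α 0).2) * ((R.α 3).1 - (R.α 0).1)) * kE
  have H158 : ((-1) * (((R.α 1).1 - (R.α 0).1) * ((R.α 4).2 - (R.α 0).2) - ((R.α 1).2 - (R.α 0).2) * ((R.α 4).1 - (R.α 0).1)) * s * (((R.α 8).1 - (R.α 0).1) * ((R.α 3).2 - (R.α 0).2) - ((R.α 8).2 - (R.α 0).2) * ((R.α 3).1 - (R.α 0).1)) + (1) * (((R.α 4).1 - (R.α 0).1) * ((R.α 3).2 - (R.α 0).2) - ((R.α 4).2 - (R.α 0).2) * ((R.α 3).1 - (R.α 0).1)) * s * (((R.α 1).1 - (R.α 0).1) * ((R.α 8).2 - (R.α 0).2) - ((R.α 1).2 - (R.α 0).2) * ((R.α 8).1 - (R.α 0).1)) + (-1) * (((R.α 1).1 - (R.α 0).1) * ((R.α 3).2 - (R.α 0).2) - ((R.α 1).2 - (R.α 0).2) * ((R.α 3).1 - (R.α 0).1)) * (((R.α 1).1 - (R.α 0).1) * ((R.α 8).2 - (R.α 0).2) - ((R.α 1).2 - (R.α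 0).2) * ((R.α 8).1 - (R.α 0).1)) + (-1) * (((R.α 1).1 - (R.α 0).1) * ((R.α 3).2 - (R.α 0).2) - ((R.α 1).2 - (R.α 0).2) * ((R.α 3).1 - (R.α 0).1)) * (((R.α 8).1 - (R.α 0).1) * ((R.α 3).2 - (R.α 0).2) - ((R.α 8).2 - (R.α 0).2) * ((R.α 3).1 - (R.α 0).1)) + (1) * (((R.α 1).1 - (R.α 0).1) * ((R.α 3).2 - (R.α 0).2) - ((R.α 1).2 - (R.α 0).2) * ((R.α 3).1 - (R.α 0).1)) * s * (((R.α 8).1 - (R.α 0).1) * ((R.α 3).2 - (R.α 0).2) - ((R.α 8).2 - (R.α 0).2) * ((R.α 3).1 - (R.α 0).1)) + (1) * (((R.α 1).1 - (R.α 0).1) * ((R.α 3).2 - (R.α 0).2) - ((R.α 1).2 - (R.α 0).2) * ((R.α 3).1 - (R.α 0).1)) * (((R.α 1).1 - (R.α 0).1) * ((R.α 4).2 - (R.α 0).2) - ((R.α 1).2 - (R.α 0).2) * ((R.α 4).1 - (R.α 0).1)) * s + (1) * (((R.α 1).1 - (R.α 0).1) * ((R.α 3).2 - (R.α 0).2)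 - ((R.α 1).2 - (R.α 0).2) * ((R.α 3).1 - (R.α 0).1))^2 + (-1) * (((R.α 1).1 - (R.α 0).1) * ((R.α 3).2 - (R.α 0).2) - ((R.α 1).2 - (R.α 0).2) * ((R.α 3).1 - (R.α 0).1))^2 * s) = 0 := by
    linear_combination (((R.α 1).1 - (R.α 0).1) * ((R.α 3).2 - (R.α 0).2) - ((R.α 1).2 - (R.α 0).2) * ((R.α 3).1 - (R.α 0).1)) * kF + ((1) * (R.α 1).2 * (R.α 3).1 * (R.α 8).2 + (-1) * (R.α 1).2^2 * (R.α 3).1 + (-1) * (R.α 1).1 * (R.α 3).2 * (R.α 8).2 + (1) * (R.α 1).1 * (R.α 1).2 * (R.α 3).2 + (-1) * (R.α 0).2 * (R.α 3).1 * (R.α 8).2 + (1) * (R.α 0).2 * (R.α 1).2 * (R.α 3).1 + (1) * (R.α 0).2 * (R.α 1).1 * (R.α 8).2 + (-1) * (R.α 0).2 * (R.α 1).1 * (R.α 1).2 + (1) * (R.α 0).1 * (R.α 3).2 * (R.α 8).2 + (-1) * (R.α 0).1 * (R.α 1).2 * (R.α 8).2 + (-1) * (R.α 0).1 * (R.α 1).2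 * (R.α 3).2 + (1) * (R.α 0).1 * (R.α 1).2^2) * hs1 + ((-1) * (R.α 1).2 * (R.α 3).1 * (R.α 8).1 + (1) * (R.α 1).1 * (R.α 3).2 * (R.α 8).1 + (1) * (R.α 1).1 * (R.α 1).2 * (R.α 3).1 + (-1) * (R.α 1).1^2 * (R.α 3).2 + (1) * (R.α 0).2 * (R.α 3).1 * (R.α 8).1 + (-1) * (R.α 0).2 * (R.α 1).1 * (R.α 8).1 + (-1) * (R.α 0).2 * (R.α 1).1 * (R.α 3).1 + (1) * (R.α 0).2 * (R.α 1).1^2 + (-1) * (R.α 0).1 * (R.α 3).2 * (R.α 8).1 + (1) * (R.α 0).1 * (R.α 1).2 * (R.α 8).1 + (1) * (R.α 0).1 * (R.α 1).1 * (R.α 3).2 + (-1) * (R.α 0).1 * (R.α 1).1 * (R.α 1).2) * hs2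
  have H246 : ((-1) * (((R.α 1).1 - (R.α 0).1) * ((R.α 4).2 - (R.α 0).2) - ((R.α 1).2 - (R.α 0).2) * ((R.α 4).1 - (R.α 0).1)) * (((R.α 6).1 - (R.α 0).1) * ((R.α 3).2 - (R.α 0).2) - ((R.α 6).2 - (R.α 0).2) * ((R.α 3).1 - (R.α 0).1)) + (1) * (((R.α 4).1 - (R.α 0).1) * ((R.α 3).2 - (R.α 0).2) - ((R.α 4).2 - (R.α 0).2) * ((R.α 3).1 - (R.α 0).1)) * (((R.α 1).1 - (R.α 0).1) * ((R.α 6).2 - (R.α 0).2) - ((R.α 1).2 - (R.α 0).2) * ((R.α 6).1 - (R.α 0).1)) + (-1) * (((R.α 1).1 - (R.α 0).1) * ((R.α 3).2 - (R.α 0).2) - ((R.α 1).2 - (R.α 0).2) * ((R.α 3).1 - (R.α 0).1)) * t * (((R.α 1).1 - (R.α 0).1) * ((R.α 6).2 - (R.α 0).2) - ((R.α 1).2 - (R.α 0).2) * ((R.α 6).1 - (R.α 0).1)) + (1) * (((R.α 1).1 - (R.α 0).1) * ((R.α 3).2 - (R.α 0).2) - ((R.α 1).2 - (R.α 0).2)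 * ((R.α 3).1 - (R.α 0).1)) * t * (((R.α 1).1 - (R.α 0).1) * ((R.α 4).2 - (R.α 0).2) - ((R.α 1).2 - (R.α 0).2) * ((R.α 4).1 - (R.α 0).1))) = 0 := by
    linear_combination (((R.α 1).1 - (R.α 0).1) * ((R.α 3).2 - (R.α 0).2) - ((R.α 1).2 - (R.α 0).2) * ((R.α 3).1 - (R.α 0).1)) * kG + ((-1) * (R.α 1).2 * (R.α 3).1 * (R.α 6).2 + (1) * (R.α 1).2 * (R.α 3).1 * (R.α 4).2 + (1) * (R.α 1).1 * (R.α 3).2 * (R.α 6).2 + (-1) * (R.α 1).1 * (R.α 3).2 * (R.α 4).2 + (1) * (R.α 0).2 * (R.α 3).1 * (R.α 6).2 + (-1) * (R.α 0).2 * (R.α 3).1 * (R.α 4).2 + (-1) * (R.α 0).2 * (R.α 1).1 * (R.α 6).2 + (1) * (R.α 0).2 * (R.α 1).1 * (R.α 4).2 + (-1) * (R.α 0).1 * (R.α 3).2 * (R.α 6).2 + (1) * (R.α 0).1 * (R.α 3).2 * (R.α 4).2 + (1) * (R.α 0).1 * (R.α 1).2 * (R.α 6).2 + (-1) * (R.α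 0).1 * (R.α 1).2 * (R.α 4).2) * ht1 + ((1) * (R.α 1).2 * (R.α 3).1 * (R.α 6).1 + (-1) * (R.α 1).2 * (R.α 3).1 * (R.α 4).1 + (-1) * (R.α 1).1 * (R.α 3).2 * (R.α 6).1 + (1) * (R.α 1).1 * (R.α 3).2 * (R.α 4).1 + (-1) * (R.α 0).2 * (R.α 3).1 * (R.α 6).1 + (1) * (R.α 0).2 * (R.α 3).1 * (R.α 4).1 + (1) * (R.α 0).2 * (R.α 1).1 * (R.α 6).1 + (-1) * (R.α 0).2 * (R.α 1).1 * (R.α 4).1 + (1) * (R.α 0).1 * (R.α 3).2 * (R.α 6).1 + (-1) * (R.α 0).1 * (R.α 3).2 * (R.α 4).1 + (-1) * (R.α 0).1 * (R.α 1).2 * (R.α 6).1 + (1) * (R.α 0).1 * (R.α 1).2 * (R.α 4).1) * ht2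
  have H257 : ((-1) * (((R.α 1).1 - (R.α 0).1) * ((R.α 4).2 - (R.α 0).2) - ((R.α 1).2 - (R.α 0).2) * ((R.α 4).1 - (R.α 0).1)) * s * (((R.α 7).1 - (R.α 0).1) * ((R.α 3).2 - (R.α 0).2) - ((R.α 7).2 - (R.α 0).2) * ((R.α 3).1 - (R.α 0).1)) + (1) * (((R.α 4).1 - (R.α 0).1) * ((R.α 3).2 - (R.α 0).2) - ((R.α 4).2 - (R.α 0).2) * ((R.α 3).1 - (R.α 0).1)) * s * (((R.α 1).1 - (R.α 0).1) * ((R.α 7).2 - (R.α 0).2) - ((R.α 1).2 - (R.α 0).2) * ((R.α 7).1 - (R.α 0).1)) + (-1) * (((R.α 1).1 - (R.α 0).1) * ((R.α 3).2 - (R.α 0).2) - ((R.α 1).2 - (R.α 0).2) * ((R.α 3).1 - (R.α 0).1)) * (((R.α 7).1 - (R.α 0).1) * ((R.α 3).2 - (R.α 0).2) - ((R.α 7).2 - (R.α 0).2) * ((R.α 3).1 - (R.α 0).1)) + (1) * (((R.α 1).1 - (R.α 0).1) * ((R.α 3).2 - (R.α 0).2) - ((R.α 1).2 - (R.α 0).2)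 * ((R.α 3).1 - (R.α 0).1)) * s * (((R.α 7).1 - (R.α 0).1) * ((R.α 3).2 - (R.α 0).2) - ((R.α 7).2 - (R.α 0).2) * ((R.α 3).1 - (R.α 0).1)) + (-1) * (((R.α 1).1 - (R.α 0).1) * ((R.α 3).2 - (R.α 0).2) - ((R.α 1).2 - (R.α 0).2) * ((R.α 3).1 - (R.α 0).1)) * t * (((R.α 1).1 - (R.α 0).1) * ((R.α 7).2 - (R.α 0).2) - ((R.α 1).2 - (R.α 0).2) * ((R.α 7).1 - (R.α 0).1)) + (1) * (((R.α 1).1 - (R.α 0).1) * ((R.α 3).2 - (R.α 0).2) - ((R.α 1).2 - (R.α 0).2) * ((R.α 3).1 - (R.α 0).1)) * t * (((R.α 1).1 - (R.α 0).1) * ((R.α 4).2 - (R.α 0).2) - ((R.α 1).2 - (R.α 0).2) * ((R.α 4).1 - (R.α 0).1)) * s + (1) * (((R.α 1).1 - (R.α 0).1) * ((R.α 3).2 - (R.α 0).2) - ((R.α 1).2 - (R.α 0).2) * ((R.α 3).1 - (R.α 0).1))^2 * t + (-1) * (((R.α 1).1 - (R.α 0).1) * ((R.α 3).2 - (R.α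 0).2) - ((R.α 1).2 - (R.α 0).2) * ((R.α 3).1 - (R.α 0).1))^2 * t * s) = 0 := by
    linear_combination (((R.α 1).1 - (R.α 0).1) * ((R.α 3).2 - (R.α 0).2) - ((R.α 1).2 - (R.α 0).2) * ((R.α 3).1 - (R.α 0).1)) * kH + ((-1) * (R.α 1).2 * (R.α 3).1 * (R.α 7).2 + (1) * (R.α 1).2 * (R.α 3).1 * (R.α 5).2 + (1) * (R.α 1).1 * (R.α 3).2 * (R.α 7).2 + (-1) * (R.α 1).1 * (R.α 3).2 * (R.α 5).2 + (1) * (R.α 0).2 * (R.α 3).1 * (R.α 7).2 + (-1) * (R.α 0).2 * (R.α 3).1 * (R.α 5).2 + (-1) * (R.α 0).2 * (R.α 1).1 * (R.α 7).2 + (1) * (R.α 0).2 * (R.α 1).1 * (R.α 5).2 + (-1) * (R.α 0).1 * (R.α 3).2 * (R.α 7).2 + (1) * (R.α 0).1 * (R.α 3).2 * (R.α 5).2 + (1) * (R.α 0).1 * (R.α 1).2 * (R.α 7).2 + (-1) * (R.α 0).1 * (R.α 1).2 * (R.α 5).2) * ht1 + ((1) * (R.α 1).2 * (R.α 3).1 *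 (R.α 7).1 + (-1) * (R.α 1).2 * (R.α 3).1 * (R.α 5).1 + (-1) * (R.α 1).1 * (R.α 3).2 * (R.α 7).1 + (1) * (R.α 1).1 * (R.α 3).2 * (R.α 5).1 + (-1) * (R.α 0).2 * (R.α 3).1 * (R.α 7).1 + (1) * (R.α 0).2 * (R.α 3).1 * (R.α 5).1 + (1) * (R.α 0).2 * (R.α 1).1 * (R.α 7).1 + (-1) * (R.α 0).2 * (R.α 1).1 * (R.α 5).1 + (1) * (R.α 0).1 * (R.α 3).2 * (R.α 7).1 + (-1) * (R.α 0).1 * (R.α 3).2 * (R.α 5).1 + (-1) * (R.α 0).1 * (R.α 1).2 * (R.α 7).1 + (1) * (R.α 0).1 * (R.α 1).2 * (R.α 5).1) * ht2 + ((1) * (R.α 1).2 * (R.α 3).1 * (R.α 7).2 + (-1) * (R.α 1).2^2 * (R.α 3).1 * t + (-1) * (R.α 1).1 * (R.α 3).2 * (R.α 7).2 + (1) * (R.α 1).1 * (R.α 1).2 * (R.α 3).2 * t + (-1) * (R.α 0).2 * (R.α 3).1 * (R.α 7).2 + (-1) * (R.α 0).2 * (R.α 1).2 * (R.α 3).1 +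 (2) * (R.α 0).2 * (R.α 1).2 * (R.α 3).1 * t + (1) * (R.α 0).2 * (R.α 1).1 * (R.α 7).2 + (1) * (R.α 0).2 * (R.α 1).1 * (R.α 3).2 + (-1) * (R.α 0).2 * (R.α 1).1 * (R.α 3).2 * t + (-1) * (R.α 0).2 * (R.α 1).1 * (R.α 1).2 * t + (1) * (R.α 0).2^2 * (R.α 3).1 + (-1) * (R.α 0).2^2 * (R.α 3).1 * t + (-1) * (R.α 0).2^2 * (R.α 1).1 + (1) * (R.α 0).2^2 * (R.α 1).1 * t + (1) * (R.α 0).1 * (R.α 3).2 * (R.α 7).2 + (-1) * (R.α 0).1 * (R.α 1).2 * (R.α 7).2 + (-1) * (R.α 0).1 * (R.α 1).2 * (R.α 3).2 * t + (1) * (R.α 0).1 * (R.α 1).2^2 * t + (-1) * (R.α 0).1 * (R.α 0).2 * (R.α 3).2 + (1) * (R.α 0).1 * (R.α 0).2 * (R.α 3).2 * t + (1) * (R.α 0).1 * (R.α 0).2 * (R.α 1).2 + (-1) * (R.α 0).1 * (R.α 0).2 * (R.α 1).2 * t) * hs1 + ((-1) * (R.α 1).2 * (R.α 3).1 * (R.α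 7).1 + (1) * (R.α 1).1 * (R.α 3).2 * (R.α 7).1 + (1) * (R.α 1).1 * (R.α 1).2 * (R.α 3).1 * t + (-1) * (R.α 1).1^2 * (R.α 3).2 * t + (1) * (R.α 0).2 * (R.α 3).1 * (R.α 7).1 + (-1) * (R.α 0).2 * (R.α 1).1 * (R.α 7).1 + (-1) * (R.α 0).2 * (R.α 1).1 * (R.α 3).1 * t + (1) * (R.α 0).2 * (R.α 1).1^2 * t + (-1) * (R.α 0).1 * (R.α 3).2 * (R.α 7).1 + (1) * (R.α 0).1 * (R.α 1).2 * (R.α 7).1 + (1) * (R.α 0).1 * (R.α 1).2 * (R.α 3).1 + (-1) * (R.α 0).1 * (R.α 1).2 * (R.α 3).1 * t + (-1) * (R.α 0).1 * (R.α 1).1 * (R.α 3).2 + (2) * (R.α 0).1 * (R.α 1).1 * (R.α 3).2 * t + (-1) * (R.α 0).1 * (R.α 1).1 * (R.α 1).2 * t + (-1) * (R.α 0).1 * (R.α 0).2 * (R.α 3).1 + (1) * (R.α 0).1 * (R.α 0).2 * (R.α 3).1 * t + (1) * (R.α 0).1 * (R.α 0).2 * (R.α 1).1 + (-1) * (R.α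 0).1 * (R.α 0).2 * (R.α 1).1 * t + (1) * (R.α 0).1^2 * (R.α 3).2 + (-1) * (R.α 0).1^2 * (R.α 3).2 * t + (-1) * (R.α 0).1^2 * (R.α 1).2 + (1) * (R.α 0).1^2 * (R.α 1).2 * t) * hs2
  have ND6 : ((-1) * (((R.α 1).1 - (R.α 0).1) * ((R.α 3).2 - (R.α 0).2) - ((R.α 1).2 - (R.α 0).2) * ((R.α 3).1 - (R.α 0).1)) * (((R.α 1).1 - (R.α 0).1) * ((R.α 4).2 - (R.α 0).2) - ((R.α 1).2 - (R.α 0).2) * ((R.α 4).1 - (R.α 0).1)) + (-1) * (((R.α 1).1 - (R.α 0).1) * ((R.α 3).2 - (R.α 0).2) - ((R.α 1).2 - (R.α 0).2) * ((R.α 3).1 - (R.α 0).1)) * (((R.α 4).1 - (R.α 0).1) * ((R.α 3).2 - (R.α 0).2) - ((R.α 4).2 - (R.α 0).2) * ((R.α 3).1 - (R.α 0).1)) + (1) * (((R.α 1).1 - (R.α 0).1) * ((R.α 3).2 - (R.α 0).2) - ((R.α 1).2 - (R.α 0).2) * ((R.α 3).1 - (R.α 0).1))^2 * t) ≠ 0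 := by
    have hEq : ((-1) * (((R.α 1).1 - (R.α 0).1) * ((R.α 3).2 - (R.α 0).2) - ((R.α 1).2 - (R.α 0).2) * ((R.α 3).1 - (R.α 0).1)) * (((R.α 1).1 - (R.α 0).1) * ((R.α 4).2 - (R.α 0).2) - ((R.α 1).2 - (R.α 0).2) * ((R.α 4).1 - (R.α 0).1)) + (-1) * (((R.α 1).1 - (R.α 0).1) * ((R.α 3).2 - (R.α 0).2) - ((R.α 1).2 - (R.α 0).2) * ((R.α 3).1 - (R.α 0).1)) * (((R.α 4).1 - (R.α 0).1) * ((R.α 3).2 - (R.α 0).2) - ((R.α 4).2 - (R.α 0).2) * ((R.α 3).1 - (R.α 0).1)) + (1) * (((R.α 1).1 - (R.α 0).1) * ((R.α 3).2 - (R.α 0).2) - ((R.α 1).2 - (R.α 0).2) * ((R.α 3).1 - (R.α 0).1))^2 * t) = (((R.α 1).1 - (R.α 0).1) * ((R.α 3).2 - (R.α 0).2) - ((R.α 1).2 - (R.α 0).2) * ((R.α 3).1 - (R.α 0).1)) * (((R.α 3).1 - (R.α 1).1) * ((R.α 4).2 - (R.α 2).2) - ((R.α 3).2 - (R.α 1).2)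 * ((R.α 4).1 - (R.α 2).1)) := by
      linear_combination ((1) * (R.α 1).2 * (R.α 3).1 * (R.α 3).2 + (-1) * (R.α 1).2^2 * (R.α 3).1 + (-1) * (R.α 1).1 * (R.α 3).2^2 + (1) * (R.α 1).1 * (R.α 1).2 * (R.α 3).2 + (-1) * (R.α 0).2 * (R.α 3).1 * (R.α 3).2 + (1) * (R.α 0).2 * (R.α 1).2 * (R.α 3).1 + (1) * (R.α 0).2 * (R.α 1).1 * (R.α 3).2 + (-1) * (R.α 0).2 * (R.α 1).1 * (R.α 1).2 + (1) * (R.α 0).1 * (R.α 3).2^2 + (-2) * (R.α 0).1 * (R.α 1).2 * (R.α 3).2 + (1) * (R.α 0).1 * (R.α 1).2^2) * ht1 + ((-1) * (R.α 1).2 * (R.α 3).1^2 + (1) * (R.α 1).1 * (R.α 3).1 * (R.α 3).2 + (1) * (R.α 1).1 * (R.α 1).2 * (R.α 3).1 + (-1) * (R.α 1).1^2 * (R.α 3).2 + (1) * (R.α 0).2 * (R.α 3).1^2 + (-2) * (R.α 0).2 * (R.α 1).1 * (R.α 3).1 + (1) * (R.α 0).2 * (R.α 1).1^2 + (-1) *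 (R.α 0).1 * (R.α 3).1 * (R.α 3).2 + (1) * (R.α 0).1 * (R.α 1).2 * (R.α 3).1 + (1) * (R.α 0).1 * (R.α 1).1 * (R.α 3).2 + (-1) * (R.α 0).1 * (R.α 1).1 * (R.α 1).2) * ht2
    rw [hEq]
    exact mul_ne_zero n013 nKD6
  have ND7 : ((-1) * (((R.α 1).1 - (R.α 0).1) * ((R.α 3).2 - (R.α 0).2) - ((R.α 1).2 - (R.α 0).2) * ((R.α 3).1 - (R.α 0).1)) * (((R.α 4).1 - (R.α 0).1) * ((R.α 3).2 - (R.α 0).2) - ((R.α 4).2 - (R.α 0).2) * ((R.α 3).1 - (R.α 0).1)) * s + (1) * (((R.α 1).1 - (R.α 0).1) * ((R.α 3).2 - (R.α 0).2) - ((R.α 1).2 - (R.α 0).2) * ((R.α 3).1 - (R.α 0).1))^2 * t) ≠ 0 := by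
    have hEq : ((-1) * (((R.α 1).1 - (R.α 0).1) * ((R.α 3).2 - (R.α 0).2) - ((R.α 1).2 - (R.α 0).2) * ((R.α 3).1 - (R.α 0).1)) * (((R.α 4).1 - (R.α 0).1) * ((R.α 3).2 - (R.α 0).2) - ((R.α 4).2 - (R.α 0).2) * ((R.α 3).1 - (R.α 0).1)) * s + (1) * (((R.α 1).1 - (R.α 0).1) * ((R.α 3).2 - (R.α 0).2) - ((R.α 1).2 - (R.α 0).2) * ((R.α 3).1 - (R.α 0).1))^2 * t) = (((R.α 1).1 - (R.α 0).1) * ((R.α 3).2 - (R.α 0).2) - ((R.α 1).2 - (R.α 0).2) * ((R.α 3).1 - (R.α 0).1)) * (((R.α 3).1 - (R.α 0).1) * ((R.α 5).2 - (R.α 2).2) - ((R.α 3).2 - (R.α 0).2) * ((R.α 5).1 - (R.α 2).1)) := by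
      linear_combination ((1) * (R.α 1).2 * (R.α 3).1 * (R.α 3).2 + (-1) * (R.α 1).1 * (R.α 3).2^2 + (-1) * (R.α 0).2 * (R.α 3).1 * (R.α 3).2 + (-1) * (R.α 0).2 * (R.α 1).2 * (R.α 3).1 + (2) * (R.α 0).2 * (R.α 1).1 * (R.α 3).2 + (1) * (R.α 0).2^2 * (R.α 3).1 + (-1) * (R.α 0).2^2 * (R.α 1).1 + (1) * (R.α 0).1 * (R.α 3).2^2 + (-1) * (R.α 0).1 * (R.α 1).2 * (R.α 3).2 + (-1) * (R.α 0).1 * (R.α 0).2 * (R.α 3).2 + (1) * (R.α 0).1 * (R.α 0).2 * (R.α 1).2) * ht1 + ((-1) * (R.α 1).2 * (R.α 3).1^2 + (1) * (R.α 1).1 * (R.α 3).1 * (R.α 3).2 + (1) * (R.α 0).2 * (R.α 3).1^2 + (-1) * (R.α 0).2 * (R.α 1).1 * (R.α 3).1 + (-1) * (R.α 0).1 * (R.α 3).1 * (R.α 3).2 + (2) * (R.α 0).1 * (R.α 1).2 * (R.α 3).1 + (-1) * (R.α 0).1 * (R.α 1).1 * (R.α 3).2 + (-1) * (R.α 0).1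 * (R.α 0).2 * (R.α 3).1 + (1) * (R.α 0).1 * (R.α 0).2 * (R.α 1).1 + (1) * (R.α 0).1^2 * (R.α 3).2 + (-1) * (R.α 0).1^2 * (R.α 1).2) * ht2 + ((-1) * (R.α 1).2 * (R.α 3).1 * (R.α 3).2 + (1) * (R.α 1).1 * (R.α 3).2^2 + (1) * (R.α 0).2 * (R.α 3).1 * (R.α 3).2 + (1) * (R.α 0).2 * (R.α 1).2 * (R.α 3).1 + (-2) * (R.α 0).2 * (R.α 1).1 * (R.α 3).2 + (-1) * (R.α 0).2^2 * (R.α 3).1 + (1) * (R.α 0).2^2 * (R.α 1).1 + (-1) * (R.α 0).1 * (R.α 3).2^2 + (1) * (R.α 0).1 * (R.α 1).2 * (R.α 3).2 + (1) * (R.α 0).1 * (R.α 0).2 * (R.α 3).2 + (-1) * (R.α 0).1 * (R.α 0).2 * (R.α 1).2) * hs1 + ((1) * (R.α 1).2 * (R.α 3).1^2 + (-1) * (R.α 1).1 * (R.α 3).1 * (R.α 3).2 + (-1) * (R.α 0).2 * (R.α 3).1^2 + (1) * (R.α 0).2 * (R.α 1).1 * (R.α 3).1 + (1) * (R.α 0).1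 * (R.α 3).1 * (R.α 3).2 + (-2) * (R.α 0).1 * (R.α 1).2 * (R.α 3).1 + (1) * (R.α 0).1 * (R.α 1).1 * (R.α 3).2 + (1) * (R.α 0).1 * (R.α 0).2 * (R.α 3).1 + (-1) * (R.α 0).1 * (R.α 0).2 * (R.α 1).1 + (-1) * (R.α 0).1^2 * (R.α 3).2 + (1) * (R.α 0).1^2 * (R.α 1).2) * hs2
    rw [hEq]
    exact mul_ne_zero n013 nKD7
  have ND8 : ((1) * (((R.α 1).1 - (R.α 0).1) * ((R.α 3).2 - (R.α 0).2) - ((R.α 1).2 - (R.α 0).2) * ((R.α 3).1 - (R.α 0).1)) * (((R.α 1).1 - (R.α 0).1) * ((R.α 4).2 - (R.α 0).2) - ((R.α 1).2 - (R.α 0).2) * ((R.α 4).1 - (R.α 0).1)) + (1) * (((R.α 1).1 - (R.α 0).1) * ((R.α 3).2 - (R.α 0).2) - ((R.α 1).2 - (R.α 0).2) * ((R.α 3).1 - (R.α 0).1)) * (((R.α 4).1 - (R.α 0).1) * ((R.α 3).2 - (R.α 0).2) - ((R.α 4).2 - (R.α 0).2) * ((R.α 3).1 - (R.α 0).1)) +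 (-1) * (((R.α 1).1 - (R.α 0).1) * ((R.α 3).2 - (R.α 0).2) - ((R.α 1).2 - (R.α 0).2) * ((R.α 3).1 - (R.α 0).1)) * (((R.α 4).1 - (R.α 0).1) * ((R.α 3).2 - (R.α 0).2) - ((R.α 4).2 - (R.α 0).2) * ((R.α 3).1 - (R.α 0).1)) * s) ≠ 0 := by
    have hEq : ((1) * (((R.α 1).1 - (R.α 0).1) * ((R.α 3).2 - (R.α 0).2) - ((R.α 1).2 - (R.α 0).2) * ((R.α 3).1 - (R.α 0).1)) * (((R.α 1).1 - (R.α 0).1) * ((R.α 4).2 - (R.α 0).2) - ((R.α 1).2 - (R.α 0).2) * ((R.α 4).1 - (R.α 0).1)) + (1) * (((R.α 1).1 - (R.α 0).1) * ((R.α 3).2 - (R.α 0).2) - ((R.α 1).2 - (R.α 0).2) * ((R.α 3).1 - (R.α 0).1)) * (((R.α 4).1 - (R.α 0).1) * ((R.α 3).2 - (R.α 0).2) - ((R.α 4).2 - (R.α 0).2) * ((R.α 3).1 - (R.α 0).1)) + (-1) * (((R.α 1).1 - (R.α 0).1) * ((R.α 3).2 - (R.α 0).2) - ((R.α 1).2 -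 (R.α 0).2) * ((R.α 3).1 - (R.α 0).1)) * (((R.α 4).1 - (R.α 0).1) * ((R.α 3).2 - (R.α 0).2) - ((R.α 4).2 - (R.α 0).2) * ((R.α 3).1 - (R.α 0).1)) * s) = (((R.α 1).1 - (R.α 0).1) * ((R.α 3).2 - (R.α 0).2) - ((R.α 1).2 - (R.α 0).2) * ((R.α 3).1 - (R.α 0).1)) * (((R.α 4).1 - (R.α 0).1) * ((R.α 5).2 - (R.α 1).2) - ((R.α 4).2 - (R.α 0).2) * ((R.α 5).1 - (R.α 1).1)) := by
      linear_combination ((-1) * (R.α 1).2 * (R.α 3).1 * (R.α 4).2 + (1) * (R.α 1).1 * (R.α 3).2 * (R.α 4).2 + (1) * (R.α 0).2 * (R.α 3).1 * (R.α 4).2 + (1) * (R.α 0).2 * (R.α 1).2 * (R.α 3).1 + (-1) * (R.α 0).2 * (R.α 1).1 * (R.α 4).2 + (-1) * (R.α 0).2 * (R.α 1).1 * (R.α 3).2 + (-1) * (R.α 0).2^2 * (R.α 3).1 + (1) * (R.α 0).2^2 * (R.α 1).1 + (-1) * (R.α 0).1 * (R.α 3).2 * (R.α 4).2 + (1) * (R.α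 0).1 * (R.α 1).2 * (R.α 4).2 + (1) * (R.α 0).1 * (R.α 0).2 * (R.α 3).2 + (-1) * (R.α 0).1 * (R.α 0).2 * (R.α 1).2) * hs1 + ((1) * (R.α 1).2 * (R.α 3).1 * (R.α 4).1 + (-1) * (R.α 1).1 * (R.α 3).2 * (R.α 4).1 + (-1) * (R.α 0).2 * (R.α 3).1 * (R.α 4).1 + (1) * (R.α 0).2 * (R.α 1).1 * (R.α 4).1 + (1) * (R.α 0).1 * (R.α 3).2 * (R.α 4).1 + (-1) * (R.α 0).1 * (R.α 1).2 * (R.α 4).1 + (-1) * (R.α 0).1 * (R.α 1).2 * (R.α 3).1 + (1) * (R.α 0).1 * (R.α 1).1 * (R.α 3).2 + (1) * (R.α 0).1 * (R.α 0).2 * (R.α 3).1 + (-1) * (R.α 0).1 * (R.α 0).2 * (R.α 1).1 + (-1) * (R.α 0).1^2 * (R.α 3).2 + (1) * (R.α 0).1^2 * (R.α 1).2) * hs2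
    rw [hEq]
    exact mul_ne_zero n013 nKD8
  have hT : ((-1) * (((R.α 1).1 - (R.α 0).1) * ((R.α 7).2 - (R.α 0).2) - ((R.α 1).2 - (R.α 0).2) * ((R.α 7).1 - (R.α 0).1)) * (((R.α 8).1 - (R.α 0).1) * ((R.α 3).2 - (R.α 0).2) - ((R.α 8).2 - (R.α 0).2) * ((R.α 3).1 - (R.α 0).1)) + (1) * (((R.α 7).1 - (R.α 0).1) * ((R.α 3).2 - (R.α 0).2) - ((R.α 7).2 - (R.α 0).2) * ((R.α 3).1 - (R.α 0).1)) * (((R.α 1).1 - (R.α 0).1) * ((R.α 8).2 - (R.α 0).2) - ((R.α 1).2 - (R.α 0).2) * ((R.α 8).1 - (R.α 0).1)) + (1) * (((R.α 1).1 - (R.α 0).1) * ((R.α 6).2 - (R.α 0).2) - ((R.α 1).2 - (R.α 0).2) * ((R.α 6).1 - (R.α 0).1)) * (((R.α 8).1 - (R.α 0).1) * ((R.α 3).2 - (R.α 0).2) - ((R.α 8).2 - (R.α 0).2) * ((R.α 3).1 - (R.α 0).1)) + (-1) * (((R.α 1).1 - (R.α 0).1) * ((R.α 6).2 - (R.α 0).2)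 - ((R.α 1).2 - (R.α 0).2) * ((R.α 6).1 - (R.α 0).1)) * (((R.α 7).1 - (R.α 0).1) * ((R.α 3).2 - (R.α 0).2) - ((R.α 7).2 - (R.α 0).2) * ((R.α 3).1 - (R.α 0).1)) + (-1) * (((R.α 6).1 - (R.α 0).1) * ((R.α 3).2 - (R.α 0).2) - ((R.α 6).2 - (R.α 0).2) * ((R.α 3).1 - (R.α 0).1)) * (((R.α 1).1 - (R.α 0).1) * ((R.α 8).2 - (R.α 0).2) - ((R.α 1).2 - (R.α 0).2) * ((R.α 8).1 - (R.α 0).1)) + (1) * (((R.α 6).1 - (R.α 0).1) * ((R.α 3).2 - (R.α 0).2) - ((R.α 6).2 - (R.α 0).2) * ((R.α 3).1 - (R.α 0).1)) * (((R.α 1).1 - (R.α 0).1) * ((R.α 7).2 - (R.α 0).2) - ((R.α 1).2 - (R.α 0).2) * ((R.α 7).1 - (R.α 0).1))) = 0 :=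
    pappus_core (((R.α 1).1 - (R.α 0).1) * ((R.α 3).2 - (R.α 0).2) - ((R.α 1).2 - (R.α 0).2) * ((R.α 3).1 - (R.α 0).1)) t (((R.α 4).1 - (R.α 0).1) * ((R.α 3).2 - (R.α 0).2) - ((R.α 4).2 - (R.α 0).2) * ((R.α 3).1 - (R.α 0).1)) (((R.α 1).1 - (R.α 0).1) * ((R.α 4).2 - (R.α 0).2) - ((R.α 1).2 - (R.α 0).2) * ((R.α 4).1 - (R.α 0).1)) s (((R.α 6).1 - (R.α 0).1) * ((R.α 3).2 - (R.α 0).2) - ((R.α 6).2 - (R.α 0).2) * ((R.α 3).1 - (R.α 0).1)) (((R.α 1).1 - (R.α 0).1) * ((R.α 6).2 - (R.α 0).2) - ((R.α 1).2 - (R.α 0).2) * ((R.α 6).1 - (R.α 0).1)) (((R.α 7).1 - (R.α 0).1) * ((R.α 3).2 - (R.α 0).2) - ((R.α 7).2 - (R.α 0).2) * ((R.α 3).1 - (R.α 0).1)) (((R.α 1).1 - (R.α 0).1) * ((R.α 7).2 - (R.α 0).2) - ((R.α 1).2 - (R.α 0).2) * ((R.α 7).1 - (R.α 0).1)) (((R.α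 8).1 - (R.α 0).1) * ((R.α 3).2 - (R.α 0).2) - ((R.α 8).2 - (R.α 0).2) * ((R.α 3).1 - (R.α 0).1)) (((R.α 1).1 - (R.α 0).1) * ((R.α 8).2 - (R.α 0).2) - ((R.α 1).2 - (R.α 0).2) * ((R.α 8).1 - (R.α 0).1)) H037 H048 H136 H158 H246 H257 ND6 ND7 ND8
  have hT2 : (((R.α 1).1 - (R.α 0).1) * ((R.α 3).2 - (R.α 0).2) - ((R.α 1).2 - (R.α 0).2) * ((R.α 3).1 - (R.α 0).1)) * (((R.α 7).1 - (R.α 6).1) * ((R.α 8).2 - (R.α 6).2) - ((R.α 7).2 - (R.α 6).2) * ((R.α 8).1 - (R.α 6).1)) = 0 := by linear_combination hT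
  have hT3 : ((R.α 7).1 - (R.α 6).1) * ((R.α 8).2 - (R.α 6).2) - ((R.α 7).2 - (R.α 6).2) * ((R.α 8).1 - (R.α 6).1) = 0 := (mul_eq_zero.1 hT2).resolve_left n013
  apply collinear_of_det3
  show det3 (R.α 6) (R.α 7) (R.α 8) = 0
  simp only [det3]
  linear_combination hT3
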